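/- For any f ∈ Γ₀(ℝ^n) and α > 0, the function f_α = f − env_{αf} is (1/α)-semiconvex; that is, f_α + (1/(2α))‖·‖² is convex. -/

import Mathlib

open Set
open scoped RealInnerProductSpace Pointwise

noncomputable section

abbrev E (n : ℕ) := EuclideanSpace ℝ (Fin n)

/-- Convex subdifferential. -/
def subdiff {n : ℕ} (f : E n → ℝ) (x : E n) : Set (E n) :=
  {d | ∀ y, f x + ⟪d, y - x⟫ ≤ f y}

/-- Fréchet subdifferential. -/
def fsubdiff {n : ℕ} (f : E n → ℝ) (x : E n) : Set (E n) :=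
  {d | ∀ ε > (0:ℝ), ∃ δ > (0:ℝ), ∀ u, ‖u - x‖ < δ →
    f x + ⟪d, u - x⟫ - ε * ‖u - x‖ ≤ f u}

/-- Sparsity promoting: value 0 at the origin is the global minimum and the
subdifferential at 0 contains a nonzero element. -/
def SparsityPromoting {n : ℕ} (f : E n → ℝ) : Prop :=
  f 0 = 0 ∧ (∀ x, f 0 ≤ f x) ∧ ∃ d ∈ subdiff f 0, d ≠ 0

/-- Moreau envelope with parameter `α`. -/
def env {n : ℕ} (α : ℝ) (f : E n → ℝ) (x : E n) : ℝ :=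
  sInf (Set.range fun u => f u + ‖u - x‖ ^ 2 / (2 * α))

/-- Proximity operator (as a set of minimizers). -/
def proxSet {n : ℕ} (α : ℝ) (f : E n → ℝ) (x : E n) : Set (E n) :=
  {p | ∀ u, f p + ‖p - x‖ ^ 2 / (2 * α) ≤ f u + ‖u - x‖ ^ 2 / (2 * α)}

/-- A real-valued convex function on `ℝⁿ` has at worst linear decay. -/
lemma affine_lb {n : ℕ} (f : E n → ℝ) (hconv : ConvexOn ℝ Set.univ f) (x : E n) :
    ∃ C : ℝ, 0 ≤ C ∧ ∀ u, f x - C * (1 + ‖u - x‖) ≤ f u := by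
  have hcont : Continuous f := by
    rw [← continuousOn_univ]; exact hconv.continuousOn isOpen_univ
  obtain ⟨M, hM⟩ := (isCompact_closedBall x 1).exists_bound_of_continuousOn
    hcont.continuousOn
  have hMx : |f x| ≤ M := by
    have := hM x (by simp); rwa [Real.norm_eq_abs] at this
  have hM0 : 0 ≤ M := le_trans (abs_nonneg _) hMx
  have hMx' := abs_le.1 hMx
  refine ⟨2 * M, by linarith, fun u => ?_⟩
  set s := ‖u - x‖ with hs
  have hs0 : 0 ≤ s := norm_nonneg _
  by_cases hle : s ≤ 1
  · have hu : u ∈ Metric.closedBall x 1 := by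
      rw [Metric.mem_closedBall, dist_eq_norm]; exact hle
    have hfu0 : ‖f u‖ ≤ M := hM u hu
    rw [Real.norm_eq_abs] at hfu0
    have hfu := abs_le.1 hfu0
    nlinarith
  · push_neg at hle
    have hspos : 0 < s := by linarith
    set t : ℝ := 1 / (s + 1) with ht
    have htpos : 0 < t := by positivity
    have ht1 : t ≤ 1 := by
      rw [ht, div_le_one (by linarith : (0:ℝ) < s + 1)]; linarith
    have htmul : t * (s + 1) = 1 := by rw [ht]; field_simp
    set x' : E n := x - (1 / s) • (u - x) with hx'
    have hx'mem : x' ∈ Metric.closedBall x 1 := by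
      rw [Metric.mem_closedBall, dist_eq_norm]
      have hdiff : x' - x = -((1 / s) • (u - x)) := by rw [hx']; abel
      rw [hdiff, norm_neg, norm_smul, Real.norm_eq_abs, abs_of_pos (by positivity)]
      rw [← hs]; rw [one_div, inv_mul_cancel₀ (ne_of_gt hspos)]
    have hfx'0 : ‖f x'‖ ≤ M := hM x' hx'mem
    rw [Real.norm_eq_abs] at hfx'0
    have hfx' := abs_le.1 hfx'0
    have hcomb : (1 - t) • x' + t • u = x := by
      rw [hx', ht]
      match_scalars <;> field_simp <;> ring
    have hcx := hconv.2 (mem_univ x') (mem_univ u) (by linarith : (0:ℝ) ≤ 1 - t)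
      htpos.le (by ring)
    rw [hcomb, smul_eq_mul, smul_eq_mul] at hcx
    -- f x ≤ (1-t) * f x' + t * f u
    have hmul := mul_le_mul_of_nonneg_left hcx (by linarith : (0:ℝ) ≤ s + 1)
    -- (s+1) f x ≤ (s+1)(1-t) f x' + (s+1) t f u = s f x' + f u
    nlinarith [hfx'.1, hfx'.2, hMx'.1, hMx'.2]

lemma env_bddBelow {n : ℕ} (f : E n → ℝ) (hconv : ConvexOn ℝ Set.univ f)
    (α : ℝ) (hα : 0 < α) (x : E n) :
    BddBelow (Set.range fun u => f u + ‖u - x‖ ^ 2 / (2 * α)) := by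
  obtain ⟨C, hC0, hC⟩ := affine_lb f hconv x
  refine ⟨f x - C - α * C ^ 2 / 2, ?_⟩
  rintro w ⟨u, rfl⟩
  have h1 := hC u
  set s := ‖u - x‖ with hs
  have hs0 : 0 ≤ s := norm_nonneg _
  have key : C * s - α * C ^ 2 / 2 ≤ s ^ 2 / (2 * α) := by
    rw [le_div_iff₀ (by positivity)]
    nlinarith [sq_nonneg (s - α * C)]
  simp only
  linarith

lemma env_le {n : ℕ} (f : E n → ℝ) (hconv : ConvexOn ℝ Set.univ f)
    (α : ℝ) (hα : 0 < α) (x u : E n) :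
    env α f x ≤ f u + ‖u - x‖ ^ 2 / (2 * α) :=
  csInf_le (env_bddBelow f hconv α hα x) ⟨u, rfl⟩

theorem stmt5 {n : ℕ} (f : E n → ℝ) (hconv : ConvexOn ℝ Set.univ f)
    (hlsc : LowerSemicontinuous f) (α : ℝ) (hα : 0 < α) :
    ConvexOn ℝ Set.univ (fun x => (f x - env α f x) + ‖x‖ ^ 2 / (2 * α)) := by
  refine ⟨convex_univ, fun x _ y _ a b ha hb hab => ?_⟩
  simp only [smul_eq_mul]
  set z : E n := a • x + b • y with hz
  have hfz : f z ≤ a * f x + b * f y := by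
    have := hconv.2 (mem_univ x) (mem_univ y) ha hb hab
    rwa [smul_eq_mul, smul_eq_mul] at this
  have henv : a * env α f x + b * env α f y +
      (‖z‖ ^ 2 / (2 * α) - a * (‖x‖ ^ 2 / (2 * α)) - b * (‖y‖ ^ 2 / (2 * α)))
      ≤ env α f z := by
    refine le_csInf ⟨_, ⟨x, rfl⟩⟩ ?_
    rintro w ⟨u, rfl⟩
    have e1 := mul_le_mul_of_nonneg_left (env_le f hconv α hα x u) ha
    have e2 := mul_le_mul_of_nonneg_left (env_le f hconv α hα y u) hb
    have hinner : ⟪u, z⟫ = a * ⟪u, x⟫ + b * ⟪u, y⟫ := by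
      rw [hz, inner_add_right, real_inner_smul_right, real_inner_smul_right]
    have hid : ‖u - z‖ ^ 2 - a * ‖u - x‖ ^ 2 - b * ‖u - y‖ ^ 2
        = ‖z‖ ^ 2 - a * ‖x‖ ^ 2 - b * ‖y‖ ^ 2 := by
      rw [norm_sub_sq_real, norm_sub_sq_real, norm_sub_sq_real]
      linear_combination (-2 : ℝ) * hinner - ‖u‖ ^ 2 * hab
    have hkey : f u + ‖u - z‖ ^ 2 / (2 * α)
        = a * (f u + ‖u - x‖ ^ 2 / (2 * α)) + b * (f u + ‖u - y‖ ^ 2 / (2 * α))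
          + (‖z‖ ^ 2 / (2 * α) - a * (‖x‖ ^ 2 / (2 * α)) - b * (‖y‖ ^ 2 / (2 * α))) := by
      field_simp
      linear_combination hid - (2 * α * f u) * hab
    linarith
  have hfinal : a * ((f x - env α f x) + ‖x‖ ^ 2 / (2 * α))
      + b * ((f y - env α f y) + ‖y‖ ^ 2 / (2 * α))
      = a * f x - a * env α f x + a * (‖x‖ ^ 2 / (2 * α))
        + (b * f y - b * env α f y + b * (‖y‖ ^ 2 / (2 * α))) := by ring
  linarith

end
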